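/- Let X be a Baire topological group, Z a topological group, and h : X → Z a group homomorphism such that h(X) is ω-narrow in Z and the preimage under h of every functionally open neighborhood of the identity in Z is an F_σ set in X. Then h is continuous. -/

import Mathlib

/-- A subset `A` of a topological group `Z` is ω-narrow if for every neighborhood `U` of the
identity there is a countable `C ⊆ Z` with `A ⊆ ⋃ c ∈ C, c • U` and `A ⊆ ⋃ c ∈ C, U • c`. -/
def OmegaNarrowSet {Z : Type*} [Group Z] [TopologicalSpace Z] (A : Set Z) : Prop :=
  ∀ U ∈ nhds (1 : Z), ∃ C : Set Z, C.Countable ∧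
    A ⊆ (⋃ c ∈ C, (fun u => c * u) '' U) ∧ A ⊆ ⋃ c ∈ C, (fun u => u * c) '' U

/-- A set is Fσ if it is a countable union of closed sets. -/
def IsFsigma {X : Type*} [TopologicalSpace X] (S : Set X) : Prop :=
  ∃ F : ℕ → Set X, (∀ n, IsClosed (F n)) ∧ S = ⋃ n, F n

open Filter Set Topology

lemma isMeagre_biUnion' {X : Type*} [TopologicalSpace X] {ι : Type*} {C : Set ι}
    (hC : C.Countable) {s : ι → Set X} (hs : ∀ i ∈ C, IsMeagre (s i)) :
    IsMeagre (⋃ i ∈ C, s i) := by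
  rw [IsMeagre, Set.compl_iUnion₂]
  exact (countable_bInter_mem hC).2 hs

lemma not_isMeagre_of_isOpen' {X : Type*} [TopologicalSpace X] [BaireSpace X]
    {s : Set X} (ho : IsOpen s) (hne : s.Nonempty) : ¬ IsMeagre s := by
  intro hm
  have hd : Dense sᶜ := dense_of_mem_residual hm
  obtain ⟨x, hx⟩ := hne
  obtain ⟨y, hy, hy'⟩ := hd.exists_mem_open ho ⟨x, hx⟩
  exact hy hy'

lemma not_isMeagre_univ {X : Type*} [TopologicalSpace X] [BaireSpace X] [Nonempty X] :
    ¬ IsMeagre (Set.univ : Set X) :=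
  not_isMeagre_of_isOpen' isOpen_univ Set.univ_nonempty

/-- Pettis theorem, Baire category version. -/
lemma pettis {X : Type*} [Group X] [TopologicalSpace X] [IsTopologicalGroup X] [BaireSpace X]
    {A : Set X} (hA : BaireMeasurableSet A) (hnm : ¬ IsMeagre A) :
    ∃ N ∈ 𝓝 (1 : X), ∀ z ∈ N, ∃ a ∈ A, ∃ b ∈ A, z = a * b⁻¹ := by
  obtain ⟨U, hUo, hAU⟩ := hA.residualEq_isOpen
  set M : Set X := {x | ¬ (x ∈ A ↔ x ∈ U)} with hM
  have hMm : IsMeagre M := by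
    rw [IsMeagre]
    refine Filter.mem_of_superset hAU ?_
    intro x hx
    simp only [Set.mem_compl_iff, hM, Set.mem_setOf_eq, not_not]
    exact iff_of_eq hx
  have hUne : U.Nonempty := by
    by_contra hne
    rw [Set.not_nonempty_iff_eq_empty] at hne
    refine hnm (hMm.mono ?_)
    intro x hx
    simp only [hM, Set.mem_setOf_eq]
    intro hiff
    rw [hne] at hiff
    exact (hiff.1 hx)
  obtain ⟨x₀, hx₀⟩ := hUne
  refine ⟨(fun z => z * x₀) ⁻¹' U, ?_, ?_⟩
  · exact (hUo.preimage (continuous_mul_right x₀)).mem_nhds (by simpa using hx₀)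
  · intro z hz
    set O : Set X := U ∩ (fun x => z⁻¹ * x) ⁻¹' U with hO
    have hOo : IsOpen O := hUo.inter (hUo.preimage (continuous_mul_left z⁻¹))
    have hOne : O.Nonempty := ⟨z * x₀, hz, by simpa using hx₀⟩
    set M' : Set X := M ∪ (fun x => z⁻¹ * x) ⁻¹' M with hM'
    have hM'm : IsMeagre M' := by
      rw [IsMeagre, hM', Set.compl_union]
      exact Filter.inter_mem hMm
        (hMm.preimage_of_isOpenMap (continuous_mul_left z⁻¹)
          (Homeomorph.mulLeft z⁻¹).isOpenMap)
    have : ¬ O ⊆ M' := fun hsub => not_isMeagre_of_isOpen' hOo hOne (hM'm.mono hsub)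
    obtain ⟨y, hyO, hyM'⟩ := Set.not_subset.1 this
    have hyU : y ∈ U := hyO.1
    have hyzU : z⁻¹ * y ∈ U := hyO.2
    have hyM : y ∉ M := fun hy => hyM' (Or.inl hy)
    have hyzM : z⁻¹ * y ∉ M := fun hy => hyM' (Or.inr hy)
    have hyA : y ∈ A := by
      by_contra hna
      exact hyM (by simp only [hM, Set.mem_setOf_eq]; intro hiff; exact hna (hiff.2 hyU))
    have hyzA : z⁻¹ * y ∈ A := by
      by_contra hna
      exact hyzM (by simp only [hM, Set.mem_setOf_eq]; intro hiff; exact hna (hiff.2 hyzU))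
    exact ⟨y, hyA, z⁻¹ * y, hyzA, by group⟩


/-- Functionally open small neighborhoods exist in any topological group. -/
lemma exists_funOpen {Z : Type*} [Group Z] [TopologicalSpace Z] [IsTopologicalGroup Z]
    {W : Set Z} (hW : W ∈ nhds (1 : Z)) :
    ∃ ξ : Z → ℝ, Continuous ξ ∧ (∀ z, 0 ≤ ξ z ∧ ξ z ≤ 1) ∧
      {z | 0 < ξ z} ⊆ W ∧ {z | 0 < ξ z} ∈ nhds (1 : Z) := by
  classical
  have step : ∀ S : Set Z, S ∈ 𝓝 (1 : Z) → ∃ T : Set Z, (T ∈ 𝓝 (1 : Z) ∧ T⁻¹ = T) ∧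
      ∀ a ∈ T, ∀ b ∈ T, a * b ∈ S := by
    intro S hS
    obtain ⟨V', hV', hm⟩ := exists_nhds_one_split hS
    refine ⟨V' ∩ V'⁻¹, ⟨Filter.inter_mem hV' (inv_mem_nhds_one Z hV'), ?_⟩, ?_⟩
    · rw [Set.inter_inv, inv_inv, Set.inter_comm]
    · intro a ha b hb
      exact hm a ha.1 b hb.1
  choose f hf hfm using step
  let T : ℕ → {S : Set Z // S ∈ 𝓝 (1 : Z) ∧ S⁻¹ = S} :=
    fun n => Nat.rec ⟨f W hW, hf W hW⟩ (fun _ p => ⟨f p.1 p.2.1, hf p.1 p.2.1⟩) n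
  let V : ℕ → Set Z := fun n => (T n).1
  have hVmem : ∀ n, V n ∈ 𝓝 (1 : Z) := fun n => (T n).2.1
  have hVsymm : ∀ n, (V n)⁻¹ = V n := fun n => (T n).2.2
  have hVone : ∀ n, (1 : Z) ∈ V n := fun n => mem_of_mem_nhds (hVmem n)
  have hVmul : ∀ n, ∀ a ∈ V (n + 1), ∀ b ∈ V (n + 1), a * b ∈ V n :=
    fun n => hfm (V n) ((T n).2.1)
  have hV0W : V 0 ⊆ W := fun a ha => by
    have := hfm W hW a ha 1 (hVone 0)
    simpa using this
  have hVanti : ∀ n, V (n + 1) ⊆ V n := fun n a ha => by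
    have := hVmul n a ha 1 (hVone (n + 1)); simpa using this
  set E : ℕ → Set (Z × Z) := fun n => {p | p.2 / p.1 ∈ V n} with hE
  have hEanti : Antitone E := antitone_nat_of_succ_le fun n p hp => hVanti n hp
  set F : Filter (Z × Z) := ⨅ n, 𝓟 (E n) with hF
  have hbasis : F.HasBasis (fun _ : ℕ => True) E :=
    Filter.hasBasis_iInf_principal hEanti.directed_ge
  have hEF : ∀ n, E n ∈ F := fun n => Filter.mem_iInf_of_mem n (Filter.mem_principal_self _)
  have hswap : ∀ n, Prod.swap ⁻¹' (E n) = E n := by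
    intro n
    have key : ∀ a b : Z, a / b ∈ V n → b / a ∈ V n := by
      intro a b hab
      rw [← hVsymm n]
      rw [Set.mem_inv, inv_div]
      exact hab
    ext p
    simp only [Set.mem_preimage, Set.mem_setOf_eq, Prod.fst_swap, Prod.snd_swap, hE]
    exact ⟨key _ _, key _ _⟩
  let core : UniformSpace.Core Z :=
    { uniformity := F
      refl := le_iInf fun n => Filter.principal_mono.2 (by
        rintro ⟨x, y⟩ hxy
        have : x = y := hxy
        simp only [Set.mem_setOf_eq, hE, this, div_self']
        exact hVone n)
      symm := by
        refine Filter.tendsto_iff_comap.2 ?_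
        calc F ≤ ⨅ n, Filter.comap Prod.swap (𝓟 (E n)) := le_iInf fun n => by
              rw [Filter.comap_principal, hswap n]; exact iInf_le _ n
          _ = Filter.comap Prod.swap F := by rw [hF, Filter.comap_iInf]
      comp := le_iInf fun n => by
        refine Filter.le_principal_iff.2 ?_
        refine Filter.mem_of_superset (Filter.mem_lift' (hEF (n + 1))) ?_
        rintro ⟨x, z⟩ ⟨y, hxy, hyz⟩
        have h1 : (z / y) * (y / x) ∈ V n := hVmul n _ hyz _ hxy
        have heq : z / y * (y / x) = z / x := div_mul_div_cancel z y x
        rw [heq] at h1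
        exact h1 }
  let u' : UniformSpace Z := UniformSpace.ofCore core
  have hcg : (@uniformity Z u').IsCountablyGenerated := hbasis.isCountablyGenerated
  obtain ⟨I, hI⟩ := @UniformSpace.metrizable_uniformity Z u' hcg
  set d : Z → Z → ℝ := fun a b => @dist Z I.toDist a b with hd
  have hdF : ∀ ε : ℝ, 0 < ε → {p : Z × Z | d p.1 p.2 < ε} ∈ F := by
    intro ε hε
    have h1 : {p : Z × Z | d p.1 p.2 < ε} ∈ @uniformity Z I.toUniformSpace :=
      @Metric.dist_mem_uniformity Z I ε hε
    rw [hI] at h1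
    exact h1
  have hFd : ∀ s ∈ F, ∃ ε > (0:ℝ), ∀ a b : Z, d a b < ε → (a, b) ∈ s := by
    intro s hs
    have hs' : s ∈ @uniformity Z I.toUniformSpace := by rw [hI]; exact hs
    rcases (@Metric.mem_uniformity_dist Z I s).1 hs' with ⟨ε, hε, hball⟩
    exact ⟨ε, hε, fun a b hab => hball hab⟩
  have hconts : Continuous (fun z => d 1 z) := by
    rw [continuous_iff_continuousAt]
    intro z
    rw [ContinuousAt, Metric.tendsto_nhds]
    intro δ hδ
    obtain ⟨n, -, hEn⟩ := hbasis.mem_iff.1 (hdF δ hδ)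
    have hmem : {z' | z' / z ∈ V n} ∈ 𝓝 z := by
      rw [← nhds_translation_div]
      exact Filter.preimage_mem_comap (hVmem n)
    filter_upwards [hmem] with z' hz'
    have h1 : d z z' < δ := hEn (show (z, z') ∈ E n from hz')
    have t1 : d 1 z' ≤ d 1 z + d z z' := @dist_triangle Z I 1 z z'
    have t2 : d 1 z ≤ d 1 z' + d z z' := by
      have h2 := @dist_triangle Z I 1 z' z
      have hc := @dist_comm Z I z' z
      simp only [← hd] at h2 hc ⊢
      linarith
    rw [Real.dist_eq, abs_sub_lt_iff]
    constructor <;> linarith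
  obtain ⟨ε, hε, hball⟩ := hFd (E 0) (hEF 0)
  refine ⟨fun z => max 0 (1 - d 1 z / ε), ?_, ?_, ?_, ?_⟩
  · exact continuous_const.max (continuous_const.sub (hconts.div_const ε))
  · intro z
    refine ⟨le_max_left _ _, max_le (by norm_num) ?_⟩
    have h0 : 0 ≤ d 1 z := @dist_nonneg Z I 1 z
    have : (0:ℝ) ≤ d 1 z / ε := div_nonneg h0 hε.le
    linarith
  · intro z hz
    simp only [Set.mem_setOf_eq, lt_max_iff, lt_self_iff_false, false_or] at hz
    have hlt : d 1 z < ε := by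
      have : d 1 z / ε < 1 := by linarith
      exact (div_lt_one hε).1 this
    have : (1, z) ∈ E 0 := hball 1 z hlt
    have hz0 : z ∈ V 0 := by simpa [hE] using this
    exact hV0W hz0
  · obtain ⟨n, -, hEn⟩ := hbasis.mem_iff.1 (hdF ε hε)
    refine Filter.mem_of_superset (hVmem n) ?_
    intro z hz
    have : (1, z) ∈ E n := by simpa [hE] using hz
    have hlt : d 1 z < ε := hEn this
    simp only [Set.mem_setOf_eq, lt_max_iff]
    right
    rw [sub_pos]
    exact (div_lt_one hε).2 hlt

theorem continuous_of_baire_omegaNarrow {X Z : Type*}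
    [Group X] [TopologicalSpace X] [IsTopologicalGroup X] [BaireSpace X]
    [Group Z] [TopologicalSpace Z] [IsTopologicalGroup Z]
    (h : X →* Z) (hnarrow : OmegaNarrowSet (Set.range h))
    (hFσ : ∀ W : Set Z, W ∈ nhds (1 : Z) →
      (∃ ξ : Z → ℝ, Continuous ξ ∧ (∀ z, 0 ≤ ξ z ∧ ξ z ≤ 1) ∧ W = {z | 0 < ξ z}) →
      IsFsigma (⇑h ⁻¹' W)) :
    Continuous h := by
  classical
  apply continuous_of_continuousAt_one h
  rw [ContinuousAt, map_one, Filter.tendsto_def]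
  intro W hW
  -- split W
  obtain ⟨W₁, hW₁, hsplit⟩ := exists_nhds_split_inv hW
  -- functionally open V₀ inside W₁
  obtain ⟨ξ, hξc, hξb, hξsub, hξnhds⟩ := exists_funOpen hW₁
  set V₀ : Set Z := {z | 0 < ξ z} with hV₀
  -- B is Fσ
  obtain ⟨F, hFcl, hBF⟩ := hFσ V₀ hξnhds ⟨ξ, hξc, hξb, rfl⟩
  set B : Set X := ⇑h ⁻¹' V₀ with hB
  have hBbm : BaireMeasurableSet B := by
    rw [hBF]
    exact BaireMeasurableSet.iUnion fun n =>
      BaireMeasurableSet.of_compl ((hFcl n).isOpen_compl.baireMeasurableSet)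
  -- B is non-meager
  have hBnm : ¬ IsMeagre B := by
    intro hBm
    -- split V₀ further, symmetrized
    obtain ⟨V₂', hV₂', hsplit₂⟩ := exists_nhds_split_inv hξnhds
    set V₂ : Set Z := V₂' ∩ V₂'⁻¹ with hV₂
    have hV₂mem : V₂ ∈ 𝓝 (1 : Z) := Filter.inter_mem hV₂' (inv_mem_nhds_one Z hV₂')
    have hkey : ∀ v w : Z, v ∈ V₂ → w ∈ V₂ → v⁻¹ * w ∈ V₀ := by
      intro v w hv hw
      have h1 : v⁻¹ ∈ V₂' := by
        have := hv.2; rwa [Set.mem_inv] at this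
      have h2 : w⁻¹ ∈ V₂' := by
        have := hw.2; rwa [Set.mem_inv] at this
      have := hsplit₂ v⁻¹ h1 w⁻¹ h2
      simpa [div_eq_mul_inv] using this
    obtain ⟨C, hCc, hCsub, -⟩ := hnarrow V₂ hV₂mem
    set s : Z → Set X := fun c => {x : X | h x ∈ (fun u => c * u) '' V₂} with hs
    have hsm : ∀ c ∈ C, IsMeagre (s c) := by
      intro c _
      rcases Set.eq_empty_or_nonempty (s c) with hemp | ⟨xc, hxc⟩
      · rw [hemp]; exact IsMeagre.empty
      · obtain ⟨vc, hvc, hvc'⟩ := hxc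
        have hsub : s c ⊆ (fun x => xc⁻¹ * x) ⁻¹' B := by
          rintro x ⟨v, hv, hv'⟩
          simp only [Set.mem_preimage, hB]
          have : h (xc⁻¹ * x) = vc⁻¹ * v := by
            rw [map_mul, map_inv, ← hvc', ← hv']
            group
          rw [this]
          exact hkey vc v hvc hv
        exact (hBm.preimage_of_isOpenMap (continuous_mul_left xc⁻¹)
          (Homeomorph.mulLeft xc⁻¹).isOpenMap).mono hsub
    have huniv : (Set.univ : Set X) ⊆ ⋃ c ∈ C, s c := by
      intro x _
      obtain ⟨t, ⟨c, rfl⟩, ht⟩ := hCsub ⟨x, rfl⟩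
      simp only [Set.mem_iUnion] at ht ⊢
      obtain ⟨hc, hmem⟩ := ht
      exact ⟨c, hc, hmem⟩
    exact not_isMeagre_univ ((isMeagre_biUnion' hCc hsm).mono huniv)
  -- Pettis
  obtain ⟨N, hN, hNprop⟩ := pettis hBbm hBnm
  refine Filter.mem_of_superset hN ?_
  intro z hz
  obtain ⟨a, ha, b, hb, rfl⟩ := hNprop z hz
  simp only [Set.mem_preimage, map_mul, map_inv]
  have h1 : h a ∈ W₁ := hξsub ha
  have h2 : h b ∈ W₁ := hξsub hb
  have := hsplit (h a) h1 (h b) h2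
  simpa [div_eq_mul_inv] using this
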